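/- Theorem 3.1, unconditional energy stability part (fully discrete scheme): Let Δt > 0, M > 0, β > 0, α ∈ ℝ. Let Z^{n-1}, Z^n, Z^{n+1} be grid functions such that each Z^k and each Δ_h Z^k satisfies the discrete Neumann BC, let W^{n+1/2} be a grid function satisfying the discrete Neumann BC, let Ψ^n, Ψ^{n+1} be grid functions and R^n, R^{n+1} real numbers, and set Z^{n+1/2} = (Z^{n+1} + Z^n)/2, Ψ^{n+1/2} = (Ψ^{n+1} + Ψ^n)/2, R^{n+1/2} = (R^{n+1} + R^n)/2, Z̃^{n+1/2} = (3Z^n - Z^{n-1})/2. Assume E_1^h(Z̃^{n+1/2}) > 0 and that at all interior cells: (i) Ψ^{n+1} - Ψ^n + βΔt Ψ^{n+1/2} = MΔt Δ_h W^{n+1/2}; (ii) Δt Ψ^{n+1/2} = Z^{n+1} - Z^n; (iii) W^{n+1/2} = Δ_h^2 Z^{n+1/2} + 2Δ_h Z̃^{n+1/2} + α Z^{n+1/2} + (R^{n+1/2}/√(E_1^h(Z̃^{n+1/2}))) F'(Z̃^{n+1/2}); (iv) R^{n+1} - R^n = (1/(2√(E_1^h(Z̃^{n+1/2})))) (F'(Z̃^{n+1/2}),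 Z^{n+1} - Z^n)_m. Assume further that η^n, η^{n+1} are grid functions satisfying the discrete Neumann BC with -Δ_h η^k = Ψ^k at all interior cells for k ∈ {n, n+1}, and set η^{n+1/2} = (η^{n+1} + η^n)/2. Define the modified discrete pseudo energy Ẽ_d^k = (1/2)‖Δ_h Z^k‖_m^2 - ‖∇_h Z^k‖^2 + (α/2)‖Z^k‖_m^2 + (R^k)^2 + (1/(2M))‖∇_h η^k‖^2 + (1/2)‖∇_h(Z^k - Z^{k-1})‖^2. Then Ẽ_d^{n+1} - Ẽ_d^n ≤ -(β/M) Δt ‖∇_h η^{n+1/2}‖^2. -/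

import Mathlib

open Finset

/-- Discrete inner product `(f,g)_m` over interior cells `i = 1,...,Nx`, `j = 1,...,Ny`. -/
noncomputable def innerM (Nx Ny : ℕ) (hx hy : ℝ) (f g : ℕ → ℕ → ℝ) : ℝ :=
  ∑ i ∈ Finset.Icc 1 Nx, ∑ j ∈ Finset.Icc 1 Ny, hx * hy * f i j * g i j

/-- Discrete inner product `(u,v)_x` for x-edge arrays; index `i` stands for `i + 1/2`. -/
noncomputable def innerX (Nx Ny : ℕ) (hx hy : ℝ) (u v : ℕ → ℕ → ℝ) : ℝ :=
  ∑ i ∈ Finset.Icc 1 (Nx - 1), ∑ j ∈ Finset.Icc 1 Ny, hx * hy * u i j * v i j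

/-- Discrete inner product `(u,v)_y` for y-edge arrays; index `j` stands for `j + 1/2`. -/
noncomputable def innerY (Nx Ny : ℕ) (hx hy : ℝ) (u v : ℕ → ℕ → ℝ) : ℝ :=
  ∑ i ∈ Finset.Icc 1 Nx, ∑ j ∈ Finset.Icc 1 (Ny - 1), hx * hy * u i j * v i j

/-- `[d_x g]_{i+1/2, j}`, stored at index `(i, j)`. -/
noncomputable def dX (hx : ℝ) (g : ℕ → ℕ → ℝ) : ℕ → ℕ → ℝ := fun i j => (g (i + 1) j - g i j) / hx

/-- `[d_y g]_{i, j+1/2}`, stored at index `(i, j)`. -/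
noncomputable def dY (hy : ℝ) (g : ℕ → ℕ → ℝ) : ℕ → ℕ → ℝ := fun i j => (g i (j + 1) - g i j) / hy

/-- `[D_x w]_{i,j} = (w_{i+1/2,j} - w_{i-1/2,j})/h_x` for an x-edge array `w`. -/
noncomputable def DX (hx : ℝ) (w : ℕ → ℕ → ℝ) : ℕ → ℕ → ℝ := fun i j => (w i j - w (i - 1) j) / hx

/-- `[D_y w]_{i,j} = (w_{i,j+1/2} - w_{i,j-1/2})/h_y` for a y-edge array `w`. -/
noncomputable def DY (hy : ℝ) (w : ℕ → ℕ → ℝ) : ℕ → ℕ → ℝ := fun i j => (w i j - w i (j - 1)) / hy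

/-- Five-point discrete Laplacian `[Δ_h g]_{i,j}` (meaningful at interior cells). -/
noncomputable def lapH (hx hy : ℝ) (g : ℕ → ℕ → ℝ) : ℕ → ℕ → ℝ := fun i j =>
  (g (i + 1) j - 2 * g i j + g (i - 1) j) / hx ^ 2 +
  (g i (j + 1) - 2 * g i j + g i (j - 1)) / hy ^ 2

/-- The discrete homogeneous Neumann boundary condition for a grid function. -/
noncomputable def NeumannBC (Nx Ny : ℕ) (g : ℕ → ℕ → ℝ) : Prop :=
  (∀ j ∈ Finset.Icc 1 Ny, g 0 j = g 1 j ∧ g (Nx + 1) j = g Nx j) ∧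
  (∀ i ∈ Finset.Icc 1 Nx, g i 0 = g i 1 ∧ g i (Ny + 1) = g i Ny)

/-- Extension of interior data to ghost cells via the discrete Neumann BC
(clamping of indices to the interior range). -/
noncomputable def extN (Nx Ny : ℕ) (u : ℕ → ℕ → ℝ) : ℕ → ℕ → ℝ := fun i j =>
  u (min (max i 1) Nx) (min (max j 1) Ny)

/-- `‖∇_h g‖² = (d_x g, d_x g)_x + (d_y g, d_y g)_y`. -/
noncomputable def gradSq (Nx Ny : ℕ) (hx hy : ℝ) (g : ℕ → ℕ → ℝ) : ℝ :=
  innerX Nx Ny hx hy (dX hx g) (dX hx g) + innerY Nx Ny hx hy (dY hy g) (dY hy g)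

/-- `Δ_h² g`, where `Δ_h g` is extended to ghost cells via its own Neumann BC. -/
noncomputable def lap2H (Nx Ny : ℕ) (hx hy : ℝ) (g : ℕ → ℕ → ℝ) : ℕ → ℕ → ℝ :=
  lapH hx hy (extN Nx Ny (lapH hx hy g))

/-- `Δ_h³ g`, where `Δ_h g`, `Δ_h² g` are extended to ghost cells via their own Neumann BC. -/
noncomputable def lap3H (Nx Ny : ℕ) (hx hy : ℝ) (g : ℕ → ℕ → ℝ) : ℕ → ℕ → ℝ :=
  lapH hx hy (extN Nx Ny (lap2H Nx Ny hx hy g))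

/-- Discrete energy `E_1^h(g) = Σ h_x h_y F(g_{ij})` with `F(s) = s⁴/4`. -/
noncomputable def E1h (Nx Ny : ℕ) (hx hy : ℝ) (g : ℕ → ℕ → ℝ) : ℝ :=
  ∑ i ∈ Finset.Icc 1 Nx, ∑ j ∈ Finset.Icc 1 Ny, hx * hy * (g i j ^ 4 / 4)

/-- The modified discrete pseudo energy
`Ẽ_d = (1/2)‖Δ_h Z‖_m² - ‖∇_h Z‖² + (α/2)‖Z‖_m² + R² + (1/(2M))‖∇_h η‖²
        + (1/2)‖∇_h(Z - Z_prev)‖²`. -/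
noncomputable def Ed (Nx Ny : ℕ) (hx hy M α : ℝ) (Z Zprev η : ℕ → ℕ → ℝ) (R : ℝ) : ℝ :=
  1 / 2 * innerM Nx Ny hx hy (lapH hx hy Z) (lapH hx hy Z)
    - gradSq Nx Ny hx hy Z + α / 2 * innerM Nx Ny hx hy Z Z + R ^ 2
    + 1 / (2 * M) * gradSq Nx Ny hx hy η
    + 1 / 2 * gradSq Nx Ny hx hy (fun i j => Z i j - Zprev i j)


namespace EStab
lemma sum2_ext {s t : Finset ℕ} {F G : ℕ → ℕ → ℝ}
    (h : ∀ i ∈ s, ∀ j ∈ t, F i j = G i j) :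
    ∑ i ∈ s, ∑ j ∈ t, F i j = ∑ i ∈ s, ∑ j ∈ t, G i j :=
  Finset.sum_congr rfl fun i hi => Finset.sum_congr rfl fun j hj => h i hi j hj

lemma abel1 (N : ℕ) (hN : 1 ≤ N) (f w : ℕ → ℝ) :
    ∑ i ∈ Finset.Icc 1 N, (f (i+1) - 2*f i + f (i-1)) * w i
      = (f (N+1) - f N) * w N - (f 1 - f 0) * w 1
        - ∑ i ∈ Finset.Icc 1 (N-1), (f (i+1) - f i) * (w (i+1) - w i) := by
  induction N, hN using Nat.le_induction with
  | base => simp; ring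
  | succ n hn ih =>
      obtain ⟨m, rfl⟩ : ∃ m, n = m + 1 := ⟨n - 1, by omega⟩
      simp only [Nat.add_sub_cancel] at ih ⊢
      rw [Finset.sum_Icc_succ_top (by omega : 1 ≤ m + 1 + 1), ih,
        Finset.sum_Icc_succ_top (by omega : 1 ≤ m + 1)]
      simp only [Nat.add_sub_cancel]
      ring

noncomputable def ip2 (s t : Finset ℕ) (hx hy : ℝ) (u v : ℕ → ℕ → ℝ) : ℝ :=
  ∑ i ∈ s, ∑ j ∈ t, hx * hy * u i j * v i j

lemma ip2_comm (s t : Finset ℕ) (hx hy : ℝ) (u v : ℕ → ℕ → ℝ) :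
    ip2 s t hx hy u v = ip2 s t hx hy v u :=
  sum2_ext fun i _ j _ => by ring

lemma ip2_congr {s t : Finset ℕ} {hx hy : ℝ} {u v u' v' : ℕ → ℕ → ℝ}
    (h : ∀ i ∈ s, ∀ j ∈ t, hx * hy * u i j * v i j = hx * hy * u' i j * v' i j) :
    ip2 s t hx hy u v = ip2 s t hx hy u' v' := sum2_ext h

lemma ip2_nonneg (s t : Finset ℕ) {hx hy : ℝ} (h1 : 0 ≤ hx) (h2 : 0 ≤ hy)
    (u : ℕ → ℕ → ℝ) : 0 ≤ ip2 s t hx hy u u := by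
  refine Finset.sum_nonneg fun i _ => Finset.sum_nonneg fun j _ => ?_
  have : hx * hy * u i j * u i j = hx * hy * (u i j * u i j) := by ring
  rw [this]
  exact mul_nonneg (mul_nonneg h1 h2) (mul_self_nonneg _)

lemma ip2_avgdiff (s t : Finset ℕ) (hx hy : ℝ) (f g : ℕ → ℕ → ℝ) :
    ip2 s t hx hy (fun i j => (f i j + g i j) / 2) (fun i j => f i j - g i j)
      = (ip2 s t hx hy f f - ip2 s t hx hy g g) / 2 := by
  unfold ip2
  rw [sum2_ext (G := fun i j => hx*hy*f i j*f i j/2 - hx*hy*g i j*g i j/2)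
    (fun i _ j _ => by ring)]
  simp only [Finset.sum_sub_distrib, ← Finset.sum_div, sub_div]

lemma ip2_key3 (s t : Finset ℕ) (hx hy : ℝ) (a b c : ℕ → ℕ → ℝ) :
    2 * ip2 s t hx hy (fun i j => (3 * b i j - c i j) / 2) (fun i j => a i j - b i j)
      = ip2 s t hx hy a a - ip2 s t hx hy b b
        - ip2 s t hx hy (fun i j => a i j - b i j) (fun i j => a i j - b i j) / 2
        + ip2 s t hx hy (fun i j => b i j - c i j) (fun i j => b i j - c i j) / 2
        - ip2 s t hx hy (fun i j => a i j - 2 * b i j + c i j)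
            (fun i j => a i j - 2 * b i j + c i j) / 2 := by
  unfold ip2
  rw [Finset.mul_sum]
  simp only [Finset.mul_sum]
  rw [sum2_ext (G := fun i j =>
      hx*hy*a i j*a i j - hx*hy*b i j*b i j
      - hx*hy*(a i j - b i j)*(a i j - b i j)/2
      + hx*hy*(b i j - c i j)*(b i j - c i j)/2
      - hx*hy*(a i j - 2*b i j + c i j)*(a i j - 2*b i j + c i j)/2)
    (fun i _ j _ => by ring)]
  simp only [Finset.sum_sub_distrib, Finset.sum_add_distrib, ← Finset.sum_div, sub_div, add_div]

lemma ip2_smul_right (s t : Finset ℕ) (hx hy r : ℝ) (u v : ℕ → ℕ → ℝ) :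
    ip2 s t hx hy u (fun i j => r * v i j) = r * ip2 s t hx hy u v := by
  unfold ip2
  rw [Finset.mul_sum]
  refine Finset.sum_congr rfl fun i _ => ?_
  rw [Finset.mul_sum]
  exact Finset.sum_congr rfl fun j _ => by ring

lemma ip2_add_right (s t : Finset ℕ) (hx hy : ℝ) (u v w : ℕ → ℕ → ℝ) :
    ip2 s t hx hy u (fun i j => v i j + w i j)
      = ip2 s t hx hy u v + ip2 s t hx hy u w := by
  unfold ip2
  rw [← Finset.sum_add_distrib]
  refine Finset.sum_congr rfl fun i _ => ?_
  rw [← Finset.sum_add_distrib]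
  exact Finset.sum_congr rfl fun j _ => by ring


lemma neumann_combo {Nx Ny : ℕ} {f g : ℕ → ℕ → ℝ} (φ : ℝ → ℝ → ℝ)
    (hf : NeumannBC Nx Ny f) (hg : NeumannBC Nx Ny g) :
    NeumannBC Nx Ny (fun i j => φ (f i j) (g i j)) := by
  constructor
  · intro j hj
    obtain ⟨hf1, hf2⟩ := hf.1 j hj
    obtain ⟨hg1, hg2⟩ := hg.1 j hj
    exact ⟨by simp only [hf1, hg1], by simp only [hf2, hg2]⟩
  · intro i hi
    obtain ⟨hf1, hf2⟩ := hf.2 i hi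
    obtain ⟨hg1, hg2⟩ := hg.2 i hi
    exact ⟨by simp only [hf1, hg1], by simp only [hf2, hg2]⟩

lemma sbpX (Nx Ny : ℕ) (hNx : 1 ≤ Nx) (hx hy : ℝ) (hhx : hx ≠ 0)
    (g w : ℕ → ℕ → ℝ)
    (hg : ∀ j ∈ Finset.Icc 1 Ny, g 0 j = g 1 j ∧ g (Nx + 1) j = g Nx j) :
    ∑ i ∈ Finset.Icc 1 Nx, ∑ j ∈ Finset.Icc 1 Ny,
        hx * hy * ((g (i+1) j - 2 * g i j + g (i-1) j) / hx ^ 2) * w i j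
      = -ip2 (Finset.Icc 1 (Nx - 1)) (Finset.Icc 1 Ny) hx hy (dX hx g) (dX hx w) := by
  unfold ip2
  rw [Finset.sum_comm, Finset.sum_comm (s := Finset.Icc 1 (Nx - 1)), ← Finset.sum_neg_distrib]
  refine Finset.sum_congr rfl fun j hj => ?_
  obtain ⟨hb1, hb2⟩ := hg j hj
  have h1 : ∑ i ∈ Finset.Icc 1 Nx, hx * hy * ((g (i+1) j - 2 * g i j + g (i-1) j) / hx ^ 2) * w i j
      = (hy / hx) * ∑ i ∈ Finset.Icc 1 Nx, (g (i+1) j - 2 * g i j + g (i-1) j) * w i j := by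
    rw [Finset.mul_sum]
    refine Finset.sum_congr rfl fun i _ => ?_
    field_simp
  have h2 := abel1 Nx hNx (fun i => g i j) (fun i => w i j)
  rw [h1, h2, hb1, hb2]
  simp only [sub_self, zero_mul, zero_sub, sub_zero, mul_neg, neg_inj]
  rw [Finset.mul_sum]
  refine Finset.sum_congr rfl fun i _ => ?_
  unfold dX
  field_simp

lemma sbpY (Nx Ny : ℕ) (hNy : 1 ≤ Ny) (hx hy : ℝ) (hhy : hy ≠ 0)
    (g w : ℕ → ℕ → ℝ)
    (hg : ∀ i ∈ Finset.Icc 1 Nx, g i 0 = g i 1 ∧ g i (Ny + 1) = g i Ny) :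
    ∑ i ∈ Finset.Icc 1 Nx, ∑ j ∈ Finset.Icc 1 Ny,
        hx * hy * ((g i (j+1) - 2 * g i j + g i (j-1)) / hy ^ 2) * w i j
      = -ip2 (Finset.Icc 1 Nx) (Finset.Icc 1 (Ny - 1)) hx hy (dY hy g) (dY hy w) := by
  unfold ip2
  rw [← Finset.sum_neg_distrib]
  refine Finset.sum_congr rfl fun i hi => ?_
  obtain ⟨hb1, hb2⟩ := hg i hi
  have h1 : ∑ j ∈ Finset.Icc 1 Ny, hx * hy * ((g i (j+1) - 2 * g i j + g i (j-1)) / hy ^ 2) * w i j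
      = (hx / hy) * ∑ j ∈ Finset.Icc 1 Ny, (g i (j+1) - 2 * g i j + g i (j-1)) * w i j := by
    rw [Finset.mul_sum]
    refine Finset.sum_congr rfl fun j _ => ?_
    field_simp
  have h2 := abel1 Ny hNy (fun j => g i j) (fun j => w i j)
  rw [h1, h2, hb1, hb2]
  simp only [sub_self, zero_mul, zero_sub, sub_zero, mul_neg, neg_inj]
  rw [Finset.mul_sum]
  refine Finset.sum_congr rfl fun j _ => ?_
  unfold dY
  field_simp

lemma sbp (Nx Ny : ℕ) (hNx : 1 ≤ Nx) (hNy : 1 ≤ Ny) (hx hy : ℝ)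
    (hhx : hx ≠ 0) (hhy : hy ≠ 0) (g w : ℕ → ℕ → ℝ) (hg : NeumannBC Nx Ny g) :
    ip2 (Finset.Icc 1 Nx) (Finset.Icc 1 Ny) hx hy (lapH hx hy g) w
      = -(ip2 (Finset.Icc 1 (Nx - 1)) (Finset.Icc 1 Ny) hx hy (dX hx g) (dX hx w)
          + ip2 (Finset.Icc 1 Nx) (Finset.Icc 1 (Ny - 1)) hx hy (dY hy g) (dY hy w)) := by
  have hsplit : ip2 (Finset.Icc 1 Nx) (Finset.Icc 1 Ny) hx hy (lapH hx hy g) w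
      = (∑ i ∈ Finset.Icc 1 Nx, ∑ j ∈ Finset.Icc 1 Ny,
          hx * hy * ((g (i+1) j - 2 * g i j + g (i-1) j) / hx ^ 2) * w i j)
        + ∑ i ∈ Finset.Icc 1 Nx, ∑ j ∈ Finset.Icc 1 Ny,
          hx * hy * ((g i (j+1) - 2 * g i j + g i (j-1)) / hy ^ 2) * w i j := by
    unfold ip2
    rw [← Finset.sum_add_distrib]
    refine Finset.sum_congr rfl fun i _ => ?_
    rw [← Finset.sum_add_distrib]
    refine Finset.sum_congr rfl fun j _ => ?_
    unfold lapH
    ring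
  rw [hsplit, sbpX Nx Ny hNx hx hy hhx g w hg.1, sbpY Nx Ny hNy hx hy hhy g w hg.2]
  ring


lemma ip2_neg_left (s t : Finset ℕ) (hx hy : ℝ) (u v : ℕ → ℕ → ℝ) :
    ip2 s t hx hy (fun i j => -u i j) v = - ip2 s t hx hy u v := by
  unfold ip2
  rw [← Finset.sum_neg_distrib]
  refine Finset.sum_congr rfl fun i _ => ?_
  rw [← Finset.sum_neg_distrib]
  exact Finset.sum_congr rfl fun j _ => by ring

lemma ip2_add_left (s t : Finset ℕ) (hx hy : ℝ) (u v w : ℕ → ℕ → ℝ) :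
    ip2 s t hx hy (fun i j => u i j + v i j) w
      = ip2 s t hx hy u w + ip2 s t hx hy v w := by
  unfold ip2
  rw [← Finset.sum_add_distrib]
  refine Finset.sum_congr rfl fun i _ => ?_
  rw [← Finset.sum_add_distrib]
  exact Finset.sum_congr rfl fun j _ => by ring

lemma ip2_smul_left (s t : Finset ℕ) (hx hy r : ℝ) (u v : ℕ → ℕ → ℝ) :
    ip2 s t hx hy (fun i j => r * u i j) v = r * ip2 s t hx hy u v := by
  unfold ip2
  rw [Finset.mul_sum]
  refine Finset.sum_congr rfl fun i _ => ?_
  rw [Finset.mul_sum]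
  exact Finset.sum_congr rfl fun j _ => by ring

lemma ip2_split4_right (s t : Finset ℕ) (hx hy : ℝ) (u w v1 v2 v3 v4 : ℕ → ℕ → ℝ)
    (h : ∀ i ∈ s, ∀ j ∈ t, w i j = v1 i j + v2 i j + v3 i j + v4 i j) :
    ip2 s t hx hy u w = ip2 s t hx hy u v1 + ip2 s t hx hy u v2
      + ip2 s t hx hy u v3 + ip2 s t hx hy u v4 := by
  unfold ip2
  simp only [← Finset.sum_add_distrib]
  exact sum2_ext fun i hi j hj => by rw [h i hi j hj]; ring

lemma dX_sub (hx : ℝ) (f g : ℕ → ℕ → ℝ) :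
    dX hx (fun i j => f i j - g i j) = fun i j => dX hx f i j - dX hx g i j := by
  funext i j; simp only [dX]; ring

lemma dX_avg (hx : ℝ) (f g : ℕ → ℕ → ℝ) :
    dX hx (fun i j => (f i j + g i j) / 2) = fun i j => (dX hx f i j + dX hx g i j) / 2 := by
  funext i j; simp only [dX]; ring

lemma dX_zt (hx : ℝ) (f g : ℕ → ℕ → ℝ) :
    dX hx (fun i j => (3 * f i j - g i j) / 2)
      = fun i j => (3 * dX hx f i j - dX hx g i j) / 2 := by
  funext i j; simp only [dX]; ring

lemma dX_trip (hx : ℝ) (f g h : ℕ → ℕ → ℝ) :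
    dX hx (fun i j => f i j - 2 * g i j + h i j)
      = fun i j => dX hx f i j - 2 * dX hx g i j + dX hx h i j := by
  funext i j; simp only [dX]; ring

lemma dY_sub (hy : ℝ) (f g : ℕ → ℕ → ℝ) :
    dY hy (fun i j => f i j - g i j) = fun i j => dY hy f i j - dY hy g i j := by
  funext i j; simp only [dY]; ring

lemma dY_avg (hy : ℝ) (f g : ℕ → ℕ → ℝ) :
    dY hy (fun i j => (f i j + g i j) / 2) = fun i j => (dY hy f i j + dY hy g i j) / 2 := by
  funext i j; simp only [dY]; ring

lemma dY_zt (hy : ℝ) (f g : ℕ → ℕ → ℝ) :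
    dY hy (fun i j => (3 * f i j - g i j) / 2)
      = fun i j => (3 * dY hy f i j - dY hy g i j) / 2 := by
  funext i j; simp only [dY]; ring

lemma dY_trip (hy : ℝ) (f g h : ℕ → ℕ → ℝ) :
    dY hy (fun i j => f i j - 2 * g i j + h i j)
      = fun i j => dY hy f i j - 2 * dY hy g i j + dY hy h i j := by
  funext i j; simp only [dY]; ring

lemma lapH_sub (hx hy : ℝ) (f g : ℕ → ℕ → ℝ) :
    lapH hx hy (fun i j => f i j - g i j)
      = fun i j => lapH hx hy f i j - lapH hx hy g i j := by
  funext i j; simp only [lapH]; ring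

lemma lapH_avg (hx hy : ℝ) (f g : ℕ → ℕ → ℝ) :
    lapH hx hy (fun i j => (f i j + g i j) / 2)
      = fun i j => (lapH hx hy f i j + lapH hx hy g i j) / 2 := by
  funext i j; simp only [lapH]; ring

lemma extN_interior (Nx Ny : ℕ) (u : ℕ → ℕ → ℝ) {i j : ℕ}
    (hi : i ∈ Finset.Icc 1 Nx) (hj : j ∈ Finset.Icc 1 Ny) :
    extN Nx Ny u i j = u i j := by
  rw [Finset.mem_Icc] at hi hj
  simp only [extN]
  rw [max_eq_left hi.1, min_eq_left hi.2, max_eq_left hj.1, min_eq_left hj.2]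

lemma innerM_ip2 (Nx Ny : ℕ) (hx hy : ℝ) (f g : ℕ → ℕ → ℝ) :
    innerM Nx Ny hx hy f g = ip2 (Finset.Icc 1 Nx) (Finset.Icc 1 Ny) hx hy f g := rfl

lemma innerX_ip2 (Nx Ny : ℕ) (hx hy : ℝ) (f g : ℕ → ℕ → ℝ) :
    innerX Nx Ny hx hy f g = ip2 (Finset.Icc 1 (Nx - 1)) (Finset.Icc 1 Ny) hx hy f g := rfl

lemma innerY_ip2 (Nx Ny : ℕ) (hx hy : ℝ) (f g : ℕ → ℕ → ℝ) :
    innerY Nx Ny hx hy f g = ip2 (Finset.Icc 1 Nx) (Finset.Icc 1 (Ny - 1)) hx hy f g := rfl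

end EStab

open EStab in
/-- Theorem 3.1, unconditional energy stability part (fully discrete scheme):
`Ẽ_d^{n+1} - Ẽ_dⁿ ≤ -(β/M) Δt ‖∇_h η^{n+1/2}‖²`. -/
theorem fully_discrete_energy_stability
    (Nx Ny : ℕ) (hNx : 1 ≤ Nx) (hNy : 1 ≤ Ny)
    (hx hy : ℝ) (hhx : 0 < hx) (hhy : 0 < hy)
    (Δt M β α : ℝ) (hΔt : 0 < Δt) (hM : 0 < M) (hβ : 0 < β)
    (Zm Zn Zp W Ψn Ψp ηn ηp : ℕ → ℕ → ℝ) (Rn Rp : ℝ)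
    (hZm : NeumannBC Nx Ny Zm) (hZn : NeumannBC Nx Ny Zn) (hZp : NeumannBC Nx Ny Zp)
    (hΔZm : NeumannBC Nx Ny (extN Nx Ny (lapH hx hy Zm)))
    (hΔZn : NeumannBC Nx Ny (extN Nx Ny (lapH hx hy Zn)))
    (hΔZp : NeumannBC Nx Ny (extN Nx Ny (lapH hx hy Zp)))
    (hW : NeumannBC Nx Ny W)
    (hE1 : 0 < E1h Nx Ny hx hy (fun i j => (3 * Zn i j - Zm i j) / 2))
    (heq1 : ∀ i ∈ Finset.Icc 1 Nx, ∀ j ∈ Finset.Icc 1 Ny,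
      Ψp i j - Ψn i j + β * Δt * ((Ψp i j + Ψn i j) / 2) = M * Δt * lapH hx hy W i j)
    (heq2 : ∀ i ∈ Finset.Icc 1 Nx, ∀ j ∈ Finset.Icc 1 Ny,
      Δt * ((Ψp i j + Ψn i j) / 2) = Zp i j - Zn i j)
    (heq3 : ∀ i ∈ Finset.Icc 1 Nx, ∀ j ∈ Finset.Icc 1 Ny,
      W i j = lap2H Nx Ny hx hy (fun a b => (Zp a b + Zn a b) / 2) i j
        + 2 * lapH hx hy (fun a b => (3 * Zn a b - Zm a b) / 2) i j
        + α * ((Zp i j + Zn i j) / 2)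
        + (Rp + Rn) / 2 /
            Real.sqrt (E1h Nx Ny hx hy (fun a b => (3 * Zn a b - Zm a b) / 2)) *
            ((3 * Zn i j - Zm i j) / 2) ^ 3)
    (heq4 : Rp - Rn =
      1 / (2 * Real.sqrt (E1h Nx Ny hx hy (fun a b => (3 * Zn a b - Zm a b) / 2))) *
        innerM Nx Ny hx hy (fun i j => ((3 * Zn i j - Zm i j) / 2) ^ 3)
          (fun i j => Zp i j - Zn i j))
    (hηn : NeumannBC Nx Ny ηn) (hηp : NeumannBC Nx Ny ηp)
    (hηΨn : ∀ i ∈ Finset.Icc 1 Nx, ∀ j ∈ Finset.Icc 1 Ny, -lapH hx hy ηn i j = Ψn i j)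
    (hηΨp : ∀ i ∈ Finset.Icc 1 Nx, ∀ j ∈ Finset.Icc 1 Ny, -lapH hx hy ηp i j = Ψp i j) :
    Ed Nx Ny hx hy M α Zp Zn ηp Rp - Ed Nx Ny hx hy M α Zn Zm ηn Rn ≤
      -(β / M) * Δt * gradSq Nx Ny hx hy (fun i j => (ηp i j + ηn i j) / 2) := by
  have hhx' : hx ≠ 0 := ne_of_gt hhx
  have hhy' : hy ≠ 0 := ne_of_gt hhy
  have hΔt' : Δt ≠ 0 := ne_of_gt hΔt
  have hM' : M ≠ 0 := ne_of_gt hM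
  have hS : 0 < Real.sqrt (E1h Nx Ny hx hy (fun a b => (3 * Zn a b - Zm a b) / 2)) :=
    Real.sqrt_pos.mpr hE1
  have hS' : Real.sqrt (E1h Nx Ny hx hy (fun a b => (3 * Zn a b - Zm a b) / 2)) ≠ 0 :=
    ne_of_gt hS
  -- Neumann BC for various combinations
  have Nδ : NeumannBC Nx Ny (fun i j => Zp i j - Zn i j) :=
    neumann_combo (fun x y => x - y) hZp hZn
  have NZt : NeumannBC Nx Ny (fun i j => (3 * Zn i j - Zm i j) / 2) :=
    neumann_combo (fun x y => (3 * x - y) / 2) hZn hZm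
  have Nηh : NeumannBC Nx Ny (fun i j => (ηp i j + ηn i j) / 2) :=
    neumann_combo (fun x y => (x + y) / 2) hηp hηn
  have Nηd : NeumannBC Nx Ny (fun i j => ηp i j - ηn i j) :=
    neumann_combo (fun x y => x - y) hηp hηn
  have hGfun : extN Nx Ny (lapH hx hy (fun a b => (Zp a b + Zn a b) / 2))
      = fun i j => (extN Nx Ny (lapH hx hy Zp) i j + extN Nx Ny (lapH hx hy Zn) i j) / 2 := by
    funext i j; simp only [extN, lapH]; ring
  have NG : NeumannBC Nx Ny (extN Nx Ny (lapH hx hy (fun a b => (Zp a b + Zn a b) / 2))) := by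
    rw [hGfun]; exact neumann_combo (fun x y => (x + y) / 2) hΔZp hΔZn
  ----------------------------------------------------------------
  -- Step 1: pairing the momentum equation with η^{n+1/2}
  ----------------------------------------------------------------
  -- (F2)  (Ψ^{n+1}-Ψ^n, η^{n+1/2})_m = (‖∇η^{n+1}‖² - ‖∇η^n‖²)/2
  have hF2 : ip2 (Finset.Icc 1 Nx) (Finset.Icc 1 Ny) hx hy
        (fun i j => Ψp i j - Ψn i j) (fun i j => (ηp i j + ηn i j) / 2)
      = ((ip2 (Finset.Icc 1 (Nx - 1)) (Finset.Icc 1 Ny) hx hy (dX hx ηp) (dX hx ηp)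
          + ip2 (Finset.Icc 1 Nx) (Finset.Icc 1 (Ny - 1)) hx hy (dY hy ηp) (dY hy ηp))
        - (ip2 (Finset.Icc 1 (Nx - 1)) (Finset.Icc 1 Ny) hx hy (dX hx ηn) (dX hx ηn)
          + ip2 (Finset.Icc 1 Nx) (Finset.Icc 1 (Ny - 1)) hx hy (dY hy ηn) (dY hy ηn))) / 2 := by
    have e0 : ip2 (Finset.Icc 1 Nx) (Finset.Icc 1 Ny) hx hy
          (lapH hx hy (fun i j => ηp i j - ηn i j)) (fun i j => (ηp i j + ηn i j) / 2)
        = ip2 (Finset.Icc 1 Nx) (Finset.Icc 1 Ny) hx hy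
          (fun i j => -(Ψp i j - Ψn i j)) (fun i j => (ηp i j + ηn i j) / 2) := by
      refine ip2_congr fun i hi j hj => ?_
      have h1 := hηΨp i hi j hj
      have h2 := hηΨn i hi j hj
      have h3 : lapH hx hy (fun i j => ηp i j - ηn i j) i j
          = lapH hx hy ηp i j - lapH hx hy ηn i j := by simp only [lapH]; ring
      rw [h3, ← h1, ← h2]; ring
    have e1 := ip2_neg_left (Finset.Icc 1 Nx) (Finset.Icc 1 Ny) hx hy
      (fun i j => Ψp i j - Ψn i j) (fun i j => (ηp i j + ηn i j) / 2)
    have e2 := sbp Nx Ny hNx hNy hx hy hhx' hhy'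
      (fun i j => ηp i j - ηn i j) (fun i j => (ηp i j + ηn i j) / 2) Nηd
    rw [dX_sub, dX_avg, dY_sub, dY_avg] at e2
    have x1 := ip2_avgdiff (Finset.Icc 1 (Nx - 1)) (Finset.Icc 1 Ny) hx hy (dX hx ηp) (dX hx ηn)
    have x2 := ip2_avgdiff (Finset.Icc 1 Nx) (Finset.Icc 1 (Ny - 1)) hx hy (dY hy ηp) (dY hy ηn)
    have c1 := ip2_comm (Finset.Icc 1 (Nx - 1)) (Finset.Icc 1 Ny) hx hy
      (fun i j => dX hx ηp i j - dX hx ηn i j) (fun i j => (dX hx ηp i j + dX hx ηn i j) / 2)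
    have c2 := ip2_comm (Finset.Icc 1 Nx) (Finset.Icc 1 (Ny - 1)) hx hy
      (fun i j => dY hy ηp i j - dY hy ηn i j) (fun i j => (dY hy ηp i j + dY hy ηn i j) / 2)
    linarith [e0, e1, e2, x1, x2, c1, c2]
  -- (F3)  (Ψ^{n+1/2}, η^{n+1/2})_m = ‖∇η^{n+1/2}‖²
  have hF3 : ip2 (Finset.Icc 1 Nx) (Finset.Icc 1 Ny) hx hy
        (fun i j => (Ψp i j + Ψn i j) / 2) (fun i j => (ηp i j + ηn i j) / 2)
      = ip2 (Finset.Icc 1 (Nx - 1)) (Finset.Icc 1 Ny) hx hy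
          (dX hx (fun i j => (ηp i j + ηn i j) / 2)) (dX hx (fun i j => (ηp i j + ηn i j) / 2))
        + ip2 (Finset.Icc 1 Nx) (Finset.Icc 1 (Ny - 1)) hx hy
          (dY hy (fun i j => (ηp i j + ηn i j) / 2)) (dY hy (fun i j => (ηp i j + ηn i j) / 2)) := by
    have e0 : ip2 (Finset.Icc 1 Nx) (Finset.Icc 1 Ny) hx hy
          (lapH hx hy (fun i j => (ηp i j + ηn i j) / 2)) (fun i j => (ηp i j + ηn i j) / 2)
        = ip2 (Finset.Icc 1 Nx) (Finset.Icc 1 Ny) hx hy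
          (fun i j => -((Ψp i j + Ψn i j) / 2)) (fun i j => (ηp i j + ηn i j) / 2) := by
      refine ip2_congr fun i hi j hj => ?_
      have h1 := hηΨp i hi j hj
      have h2 := hηΨn i hi j hj
      have h3 : lapH hx hy (fun i j => (ηp i j + ηn i j) / 2) i j
          = (lapH hx hy ηp i j + lapH hx hy ηn i j) / 2 := by simp only [lapH]; ring
      rw [h3, ← h1, ← h2]; ring
    have e1 := ip2_neg_left (Finset.Icc 1 Nx) (Finset.Icc 1 Ny) hx hy
      (fun i j => (Ψp i j + Ψn i j) / 2) (fun i j => (ηp i j + ηn i j) / 2)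
    have e2 := sbp Nx Ny hNx hNy hx hy hhx' hhy'
      (fun i j => (ηp i j + ηn i j) / 2) (fun i j => (ηp i j + ηn i j) / 2) Nηh
    linarith [e0, e1, e2]
  -- (F4)  Δt (Δ_h W^{n+1/2}, η^{n+1/2})_m = -(Z^{n+1}-Z^n, W^{n+1/2})_m
  have hF4 : Δt * ip2 (Finset.Icc 1 Nx) (Finset.Icc 1 Ny) hx hy
        (lapH hx hy W) (fun i j => (ηp i j + ηn i j) / 2)
      = - ip2 (Finset.Icc 1 Nx) (Finset.Icc 1 Ny) hx hy
          (fun i j => Zp i j - Zn i j) W := by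
    have s1 := sbp Nx Ny hNx hNy hx hy hhx' hhy' W (fun i j => (ηp i j + ηn i j) / 2) hW
    have s2 := sbp Nx Ny hNx hNy hx hy hhx' hhy' (fun i j => (ηp i j + ηn i j) / 2) W Nηh
    have c1 := ip2_comm (Finset.Icc 1 (Nx - 1)) (Finset.Icc 1 Ny) hx hy
      (dX hx W) (dX hx (fun i j => (ηp i j + ηn i j) / 2))
    have c2 := ip2_comm (Finset.Icc 1 Nx) (Finset.Icc 1 (Ny - 1)) hx hy
      (dY hy W) (dY hy (fun i j => (ηp i j + ηn i j) / 2))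
    have e0 : ip2 (Finset.Icc 1 Nx) (Finset.Icc 1 Ny) hx hy
          (lapH hx hy (fun i j => (ηp i j + ηn i j) / 2)) W
        = ip2 (Finset.Icc 1 Nx) (Finset.Icc 1 Ny) hx hy
          (fun i j => -((Ψp i j + Ψn i j) / 2)) W := by
      refine ip2_congr fun i hi j hj => ?_
      have h1 := hηΨp i hi j hj
      have h2 := hηΨn i hi j hj
      have h3 : lapH hx hy (fun i j => (ηp i j + ηn i j) / 2) i j
          = (lapH hx hy ηp i j + lapH hx hy ηn i j) / 2 := by simp only [lapH]; ring
      rw [h3, ← h1, ← h2]; ring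
    have e1 := ip2_neg_left (Finset.Icc 1 Nx) (Finset.Icc 1 Ny) hx hy
      (fun i j => (Ψp i j + Ψn i j) / 2) W
    have e2 : ip2 (Finset.Icc 1 Nx) (Finset.Icc 1 Ny) hx hy
          (fun i j => (Ψp i j + Ψn i j) / 2) W
        = ip2 (Finset.Icc 1 Nx) (Finset.Icc 1 Ny) hx hy
          (fun i j => 1 / Δt * (Zp i j - Zn i j)) W := by
      refine ip2_congr fun i hi j hj => ?_
      rw [← heq2 i hi j hj]
      field_simp
    have e3 := ip2_smul_left (Finset.Icc 1 Nx) (Finset.Icc 1 Ny) hx hy (1 / Δt)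
      (fun i j => Zp i j - Zn i j) W
    have e4 : ip2 (Finset.Icc 1 Nx) (Finset.Icc 1 Ny) hx hy
          (lapH hx hy W) (fun i j => (ηp i j + ηn i j) / 2)
        = -(1 / Δt * ip2 (Finset.Icc 1 Nx) (Finset.Icc 1 Ny) hx hy
            (fun i j => Zp i j - Zn i j) W) := by
      linarith [s1, s2, c1, c2, e0, e1, e2, e3]
    rw [e4]
    field_simp
  -- (F1)  the scheme equation paired with η^{n+1/2}
  have hF1 : ip2 (Finset.Icc 1 Nx) (Finset.Icc 1 Ny) hx hy
        (fun i j => Ψp i j - Ψn i j) (fun i j => (ηp i j + ηn i j) / 2)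
      + β * Δt * ip2 (Finset.Icc 1 Nx) (Finset.Icc 1 Ny) hx hy
          (fun i j => (Ψp i j + Ψn i j) / 2) (fun i j => (ηp i j + ηn i j) / 2)
      = M * Δt * ip2 (Finset.Icc 1 Nx) (Finset.Icc 1 Ny) hx hy
          (lapH hx hy W) (fun i j => (ηp i j + ηn i j) / 2) := by
    have h0 : ip2 (Finset.Icc 1 Nx) (Finset.Icc 1 Ny) hx hy
          (fun i j => Ψp i j - Ψn i j + β * Δt * ((Ψp i j + Ψn i j) / 2))
          (fun i j => (ηp i j + ηn i j) / 2)
        = ip2 (Finset.Icc 1 Nx) (Finset.Icc 1 Ny) hx hy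
          (fun i j => M * Δt * lapH hx hy W i j) (fun i j => (ηp i j + ηn i j) / 2) :=
      ip2_congr fun i hi j hj => by rw [heq1 i hi j hj]
    have h1 := ip2_add_left (Finset.Icc 1 Nx) (Finset.Icc 1 Ny) hx hy
      (fun i j => Ψp i j - Ψn i j) (fun i j => β * Δt * ((Ψp i j + Ψn i j) / 2))
      (fun i j => (ηp i j + ηn i j) / 2)
    have h2 := ip2_smul_left (Finset.Icc 1 Nx) (Finset.Icc 1 Ny) hx hy (β * Δt)
      (fun i j => (Ψp i j + Ψn i j) / 2) (fun i j => (ηp i j + ηn i j) / 2)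
    have h3 := ip2_smul_left (Finset.Icc 1 Nx) (Finset.Icc 1 Ny) hx hy (M * Δt)
      (lapH hx hy W) (fun i j => (ηp i j + ηn i j) / 2)
    rw [h1, h2, h3] at h0
    exact h0
  ----------------------------------------------------------------
  -- Step 2: expanding (Z^{n+1}-Z^n, W^{n+1/2})_m via the chemical potential
  ----------------------------------------------------------------
  have hsplit : ip2 (Finset.Icc 1 Nx) (Finset.Icc 1 Ny) hx hy
        (fun i j => Zp i j - Zn i j) W
      = ip2 (Finset.Icc 1 Nx) (Finset.Icc 1 Ny) hx hy (fun i j => Zp i j - Zn i j)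
          (lap2H Nx Ny hx hy (fun a b => (Zp a b + Zn a b) / 2))
        + ip2 (Finset.Icc 1 Nx) (Finset.Icc 1 Ny) hx hy (fun i j => Zp i j - Zn i j)
            (fun i j => 2 * lapH hx hy (fun a b => (3 * Zn a b - Zm a b) / 2) i j)
        + ip2 (Finset.Icc 1 Nx) (Finset.Icc 1 Ny) hx hy (fun i j => Zp i j - Zn i j)
            (fun i j => α * ((Zp i j + Zn i j) / 2))
        + ip2 (Finset.Icc 1 Nx) (Finset.Icc 1 Ny) hx hy (fun i j => Zp i j - Zn i j)
            (fun i j => (Rp + Rn) / 2 /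
              Real.sqrt (E1h Nx Ny hx hy (fun a b => (3 * Zn a b - Zm a b) / 2)) *
              ((3 * Zn i j - Zm i j) / 2) ^ 3) :=
    ip2_split4_right _ _ _ _ _ _ _ _ _ _ heq3
  -- (P1)  biharmonic term
  have hP1 : ip2 (Finset.Icc 1 Nx) (Finset.Icc 1 Ny) hx hy (fun i j => Zp i j - Zn i j)
        (lap2H Nx Ny hx hy (fun a b => (Zp a b + Zn a b) / 2))
      = (ip2 (Finset.Icc 1 Nx) (Finset.Icc 1 Ny) hx hy (lapH hx hy Zp) (lapH hx hy Zp)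
        - ip2 (Finset.Icc 1 Nx) (Finset.Icc 1 Ny) hx hy (lapH hx hy Zn) (lapH hx hy Zn)) / 2 := by
    have hT1 : lap2H Nx Ny hx hy (fun a b => (Zp a b + Zn a b) / 2)
        = lapH hx hy (extN Nx Ny (lapH hx hy (fun a b => (Zp a b + Zn a b) / 2))) := rfl
    have q0 := ip2_comm (Finset.Icc 1 Nx) (Finset.Icc 1 Ny) hx hy
      (fun i j => Zp i j - Zn i j)
      (lapH hx hy (extN Nx Ny (lapH hx hy (fun a b => (Zp a b + Zn a b) / 2))))
    have q2 := sbp Nx Ny hNx hNy hx hy hhx' hhy'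
      (extN Nx Ny (lapH hx hy (fun a b => (Zp a b + Zn a b) / 2)))
      (fun i j => Zp i j - Zn i j) NG
    have q3 := sbp Nx Ny hNx hNy hx hy hhx' hhy'
      (fun i j => Zp i j - Zn i j)
      (extN Nx Ny (lapH hx hy (fun a b => (Zp a b + Zn a b) / 2))) Nδ
    have c1 := ip2_comm (Finset.Icc 1 (Nx - 1)) (Finset.Icc 1 Ny) hx hy
      (dX hx (extN Nx Ny (lapH hx hy (fun a b => (Zp a b + Zn a b) / 2))))
      (dX hx (fun i j => Zp i j - Zn i j))
    have c2 := ip2_comm (Finset.Icc 1 Nx) (Finset.Icc 1 (Ny - 1)) hx hy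
      (dY hy (extN Nx Ny (lapH hx hy (fun a b => (Zp a b + Zn a b) / 2))))
      (dY hy (fun i j => Zp i j - Zn i j))
    have q4 : ip2 (Finset.Icc 1 Nx) (Finset.Icc 1 Ny) hx hy
          (lapH hx hy (fun i j => Zp i j - Zn i j))
          (extN Nx Ny (lapH hx hy (fun a b => (Zp a b + Zn a b) / 2)))
        = ip2 (Finset.Icc 1 Nx) (Finset.Icc 1 Ny) hx hy
          (lapH hx hy (fun i j => Zp i j - Zn i j))
          (lapH hx hy (fun a b => (Zp a b + Zn a b) / 2)) := by
      refine ip2_congr fun i hi j hj => ?_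
      rw [extN_interior _ _ _ hi hj]
    have q5 : ip2 (Finset.Icc 1 Nx) (Finset.Icc 1 Ny) hx hy
          (lapH hx hy (fun i j => Zp i j - Zn i j))
          (lapH hx hy (fun a b => (Zp a b + Zn a b) / 2))
        = (ip2 (Finset.Icc 1 Nx) (Finset.Icc 1 Ny) hx hy (lapH hx hy Zp) (lapH hx hy Zp)
          - ip2 (Finset.Icc 1 Nx) (Finset.Icc 1 Ny) hx hy (lapH hx hy Zn) (lapH hx hy Zn)) / 2 := by
      rw [lapH_sub, lapH_avg]
      have c := ip2_comm (Finset.Icc 1 Nx) (Finset.Icc 1 Ny) hx hy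
        (fun i j => lapH hx hy Zp i j - lapH hx hy Zn i j)
        (fun i j => (lapH hx hy Zp i j + lapH hx hy Zn i j) / 2)
      have a := ip2_avgdiff (Finset.Icc 1 Nx) (Finset.Icc 1 Ny) hx hy
        (lapH hx hy Zp) (lapH hx hy Zn)
      linarith [c, a]
    rw [hT1]
    linarith [q0, q2, q3, c1, c2, q4, q5]
  -- key identity for the gradient (extrapolated) term, x and y parts
  have hkeyX : 2 * ip2 (Finset.Icc 1 (Nx - 1)) (Finset.Icc 1 Ny) hx hy
        (dX hx (fun a b => (3 * Zn a b - Zm a b) / 2)) (dX hx (fun i j => Zp i j - Zn i j))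
      = ip2 (Finset.Icc 1 (Nx - 1)) (Finset.Icc 1 Ny) hx hy (dX hx Zp) (dX hx Zp)
        - ip2 (Finset.Icc 1 (Nx - 1)) (Finset.Icc 1 Ny) hx hy (dX hx Zn) (dX hx Zn)
        - ip2 (Finset.Icc 1 (Nx - 1)) (Finset.Icc 1 Ny) hx hy
            (dX hx (fun i j => Zp i j - Zn i j)) (dX hx (fun i j => Zp i j - Zn i j)) / 2
        + ip2 (Finset.Icc 1 (Nx - 1)) (Finset.Icc 1 Ny) hx hy
            (dX hx (fun i j => Zn i j - Zm i j)) (dX hx (fun i j => Zn i j - Zm i j)) / 2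
        - ip2 (Finset.Icc 1 (Nx - 1)) (Finset.Icc 1 Ny) hx hy
            (dX hx (fun i j => Zp i j - 2 * Zn i j + Zm i j))
            (dX hx (fun i j => Zp i j - 2 * Zn i j + Zm i j)) / 2 := by
    simp only [dX_zt, dX_sub, dX_trip]
    exact ip2_key3 _ _ hx hy (dX hx Zp) (dX hx Zn) (dX hx Zm)
  have hkeyY : 2 * ip2 (Finset.Icc 1 Nx) (Finset.Icc 1 (Ny - 1)) hx hy
        (dY hy (fun a b => (3 * Zn a b - Zm a b) / 2)) (dY hy (fun i j => Zp i j - Zn i j))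
      = ip2 (Finset.Icc 1 Nx) (Finset.Icc 1 (Ny - 1)) hx hy (dY hy Zp) (dY hy Zp)
        - ip2 (Finset.Icc 1 Nx) (Finset.Icc 1 (Ny - 1)) hx hy (dY hy Zn) (dY hy Zn)
        - ip2 (Finset.Icc 1 Nx) (Finset.Icc 1 (Ny - 1)) hx hy
            (dY hy (fun i j => Zp i j - Zn i j)) (dY hy (fun i j => Zp i j - Zn i j)) / 2
        + ip2 (Finset.Icc 1 Nx) (Finset.Icc 1 (Ny - 1)) hx hy
            (dY hy (fun i j => Zn i j - Zm i j)) (dY hy (fun i j => Zn i j - Zm i j)) / 2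
        - ip2 (Finset.Icc 1 Nx) (Finset.Icc 1 (Ny - 1)) hx hy
            (dY hy (fun i j => Zp i j - 2 * Zn i j + Zm i j))
            (dY hy (fun i j => Zp i j - 2 * Zn i j + Zm i j)) / 2 := by
    simp only [dY_zt, dY_sub, dY_trip]
    exact ip2_key3 _ _ hx hy (dY hy Zp) (dY hy Zn) (dY hy Zm)
  -- (P2)  extrapolated Laplacian term
  have hP2 : ip2 (Finset.Icc 1 Nx) (Finset.Icc 1 Ny) hx hy (fun i j => Zp i j - Zn i j)
        (fun i j => 2 * lapH hx hy (fun a b => (3 * Zn a b - Zm a b) / 2) i j)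
      = -(ip2 (Finset.Icc 1 (Nx - 1)) (Finset.Icc 1 Ny) hx hy (dX hx Zp) (dX hx Zp)
          + ip2 (Finset.Icc 1 Nx) (Finset.Icc 1 (Ny - 1)) hx hy (dY hy Zp) (dY hy Zp))
        + (ip2 (Finset.Icc 1 (Nx - 1)) (Finset.Icc 1 Ny) hx hy (dX hx Zn) (dX hx Zn)
          + ip2 (Finset.Icc 1 Nx) (Finset.Icc 1 (Ny - 1)) hx hy (dY hy Zn) (dY hy Zn))
        + (ip2 (Finset.Icc 1 (Nx - 1)) (Finset.Icc 1 Ny) hx hy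
            (dX hx (fun i j => Zp i j - Zn i j)) (dX hx (fun i j => Zp i j - Zn i j))
          + ip2 (Finset.Icc 1 Nx) (Finset.Icc 1 (Ny - 1)) hx hy
            (dY hy (fun i j => Zp i j - Zn i j)) (dY hy (fun i j => Zp i j - Zn i j))) / 2
        - (ip2 (Finset.Icc 1 (Nx - 1)) (Finset.Icc 1 Ny) hx hy
            (dX hx (fun i j => Zn i j - Zm i j)) (dX hx (fun i j => Zn i j - Zm i j))
          + ip2 (Finset.Icc 1 Nx) (Finset.Icc 1 (Ny - 1)) hx hy
            (dY hy (fun i j => Zn i j - Zm i j)) (dY hy (fun i j => Zn i j - Zm i j))) / 2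
        + (ip2 (Finset.Icc 1 (Nx - 1)) (Finset.Icc 1 Ny) hx hy
            (dX hx (fun i j => Zp i j - 2 * Zn i j + Zm i j))
            (dX hx (fun i j => Zp i j - 2 * Zn i j + Zm i j))
          + ip2 (Finset.Icc 1 Nx) (Finset.Icc 1 (Ny - 1)) hx hy
            (dY hy (fun i j => Zp i j - 2 * Zn i j + Zm i j))
            (dY hy (fun i j => Zp i j - 2 * Zn i j + Zm i j))) / 2 := by
    have r1 := ip2_smul_right (Finset.Icc 1 Nx) (Finset.Icc 1 Ny) hx hy 2
      (fun i j => Zp i j - Zn i j) (lapH hx hy (fun a b => (3 * Zn a b - Zm a b) / 2))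
    have r2 := ip2_comm (Finset.Icc 1 Nx) (Finset.Icc 1 Ny) hx hy
      (fun i j => Zp i j - Zn i j) (lapH hx hy (fun a b => (3 * Zn a b - Zm a b) / 2))
    have r3 := sbp Nx Ny hNx hNy hx hy hhx' hhy'
      (fun a b => (3 * Zn a b - Zm a b) / 2) (fun i j => Zp i j - Zn i j) NZt
    linarith [r1, r2, r3, hkeyX, hkeyY]
  -- (P3)  linear term
  have hP3 : ip2 (Finset.Icc 1 Nx) (Finset.Icc 1 Ny) hx hy (fun i j => Zp i j - Zn i j)
        (fun i j => α * ((Zp i j + Zn i j) / 2))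
      = α * ((ip2 (Finset.Icc 1 Nx) (Finset.Icc 1 Ny) hx hy Zp Zp
          - ip2 (Finset.Icc 1 Nx) (Finset.Icc 1 Ny) hx hy Zn Zn) / 2) := by
    have r1 := ip2_smul_right (Finset.Icc 1 Nx) (Finset.Icc 1 Ny) hx hy α
      (fun i j => Zp i j - Zn i j) (fun i j => (Zp i j + Zn i j) / 2)
    have r2 := ip2_comm (Finset.Icc 1 Nx) (Finset.Icc 1 Ny) hx hy
      (fun i j => Zp i j - Zn i j) (fun i j => (Zp i j + Zn i j) / 2)
    have r3 := ip2_avgdiff (Finset.Icc 1 Nx) (Finset.Icc 1 Ny) hx hy Zp Zn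
    rw [r1, r2, r3]
  -- (P4)  SAV term
  have hP4 : ip2 (Finset.Icc 1 Nx) (Finset.Icc 1 Ny) hx hy (fun i j => Zp i j - Zn i j)
        (fun i j => (Rp + Rn) / 2 /
          Real.sqrt (E1h Nx Ny hx hy (fun a b => (3 * Zn a b - Zm a b) / 2)) *
          ((3 * Zn i j - Zm i j) / 2) ^ 3)
      = Rp ^ 2 - Rn ^ 2 := by
    have hQ : ip2 (Finset.Icc 1 Nx) (Finset.Icc 1 Ny) hx hy
          (fun i j => ((3 * Zn i j - Zm i j) / 2) ^ 3) (fun i j => Zp i j - Zn i j)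
        = 2 * Real.sqrt (E1h Nx Ny hx hy (fun a b => (3 * Zn a b - Zm a b) / 2)) * (Rp - Rn) := by
      rw [innerM_ip2] at heq4
      rw [heq4]
      field_simp
    have r1 := ip2_smul_right (Finset.Icc 1 Nx) (Finset.Icc 1 Ny) hx hy
      ((Rp + Rn) / 2 / Real.sqrt (E1h Nx Ny hx hy (fun a b => (3 * Zn a b - Zm a b) / 2)))
      (fun i j => Zp i j - Zn i j) (fun i j => ((3 * Zn i j - Zm i j) / 2) ^ 3)
    have r2 := ip2_comm (Finset.Icc 1 Nx) (Finset.Icc 1 Ny) hx hy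
      (fun i j => Zp i j - Zn i j) (fun i j => ((3 * Zn i j - Zm i j) / 2) ^ 3)
    rw [r1, r2, hQ]
    field_simp
    ring
  ----------------------------------------------------------------
  -- Step 3: assembling the energy balance
  ----------------------------------------------------------------
  have hBal : (ip2 (Finset.Icc 1 (Nx - 1)) (Finset.Icc 1 Ny) hx hy (dX hx ηp) (dX hx ηp)
        + ip2 (Finset.Icc 1 Nx) (Finset.Icc 1 (Ny - 1)) hx hy (dY hy ηp) (dY hy ηp))
      - (ip2 (Finset.Icc 1 (Nx - 1)) (Finset.Icc 1 Ny) hx hy (dX hx ηn) (dX hx ηn)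
        + ip2 (Finset.Icc 1 Nx) (Finset.Icc 1 (Ny - 1)) hx hy (dY hy ηn) (dY hy ηn))
      = -2 * β * Δt * (ip2 (Finset.Icc 1 (Nx - 1)) (Finset.Icc 1 Ny) hx hy
            (dX hx (fun i j => (ηp i j + ηn i j) / 2)) (dX hx (fun i j => (ηp i j + ηn i j) / 2))
          + ip2 (Finset.Icc 1 Nx) (Finset.Icc 1 (Ny - 1)) hx hy
            (dY hy (fun i j => (ηp i j + ηn i j) / 2)) (dY hy (fun i j => (ηp i j + ηn i j) / 2)))
        - 2 * M * ip2 (Finset.Icc 1 Nx) (Finset.Icc 1 Ny) hx hy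
            (fun i j => Zp i j - Zn i j) W := by
    linear_combination 2 * hF1 - 2 * hF2 - 2 * (β * Δt) * hF3 + 2 * M * hF4
  have hBal2 : 1 / (2 * M) * ((ip2 (Finset.Icc 1 (Nx - 1)) (Finset.Icc 1 Ny) hx hy (dX hx ηp) (dX hx ηp)
        + ip2 (Finset.Icc 1 Nx) (Finset.Icc 1 (Ny - 1)) hx hy (dY hy ηp) (dY hy ηp))
      - (ip2 (Finset.Icc 1 (Nx - 1)) (Finset.Icc 1 Ny) hx hy (dX hx ηn) (dX hx ηn)
        + ip2 (Finset.Icc 1 Nx) (Finset.Icc 1 (Ny - 1)) hx hy (dY hy ηn) (dY hy ηn)))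
      = -(β / M) * Δt * (ip2 (Finset.Icc 1 (Nx - 1)) (Finset.Icc 1 Ny) hx hy
            (dX hx (fun i j => (ηp i j + ηn i j) / 2)) (dX hx (fun i j => (ηp i j + ηn i j) / 2))
          + ip2 (Finset.Icc 1 Nx) (Finset.Icc 1 (Ny - 1)) hx hy
            (dY hy (fun i j => (ηp i j + ηn i j) / 2)) (dY hy (fun i j => (ηp i j + ηn i j) / 2)))
        - ip2 (Finset.Icc 1 Nx) (Finset.Icc 1 Ny) hx hy (fun i j => Zp i j - Zn i j) W := by
    rw [hBal]
    field_simp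
  have hdtrip : 0 ≤ gradSq Nx Ny hx hy (fun i j => Zp i j - 2 * Zn i j + Zm i j) := by
    unfold gradSq
    rw [innerX_ip2, innerY_ip2]
    exact add_nonneg (ip2_nonneg _ _ hhx.le hhy.le _) (ip2_nonneg _ _ hhx.le hhy.le _)
  have hEq : Ed Nx Ny hx hy M α Zp Zn ηp Rp - Ed Nx Ny hx hy M α Zn Zm ηn Rn
      = -(β / M) * Δt * gradSq Nx Ny hx hy (fun i j => (ηp i j + ηn i j) / 2)
        - gradSq Nx Ny hx hy (fun i j => Zp i j - 2 * Zn i j + Zm i j) / 2 := by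
    unfold Ed gradSq
    simp only [innerM_ip2, innerX_ip2, innerY_ip2]
    linear_combination hBal2 - hsplit - hP1 - hP2 - hP3 - hP4
  linarith [hEq, hdtrip]
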